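/- Let n ≥ 1 and let G and H be n-vertex simple graphs such that H is a reconstruction of G. Then for every simple graph F with fewer than n vertices, s(F,G) = s(F,H). -/

import Mathlib

open SimpleGraph

/-- The vertex-deleted subgraph `G − v`: the induced subgraph of `G` obtained by
deleting `v` and all edges incident with `v`. -/
abbrev vdel {n : ℕ} (G : SimpleGraph (Fin n)) (v : Fin n) :
    SimpleGraph ({v}ᶜ : Set (Fin n)) :=
  G.induce {v}ᶜ

/-- `H` is a reconstruction of `G`: there is a bijection `f` between the vertex
sets such that `G − v ≅ H − f v` for every vertex `v`. -/
def IsReconstruction {n : ℕ} (G H : SimpleGraph (Fin n)) : Prop :=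
  ∃ f : Fin n ≃ Fin n, ∀ v : Fin n, Nonempty (vdel G v ≃g vdel H (f v))

/-- `s(F,G)`: the number of subgraphs of `G` isomorphic to `F`. -/
noncomputable def subCount {k n : ℕ} (F : SimpleGraph (Fin k))
    (G : SimpleGraph (Fin n)) : ℕ :=
  Nat.card {H : G.Subgraph // Nonempty (F ≃g H.coe)}

/-- A finite sequence of simple graphs (on arbitrary finite vertex sets). -/
abbrev GSeq : Type := List (Σ k : ℕ, SimpleGraph (Fin k))

/-- `c(𝓕,G)`: the number of covers of `G` by the sequence `L`, i.e. of sequences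
of subgraphs of `G`, the `i`-th being isomorphic to the `i`-th graph of `L`,
whose union (of both vertex sets and edge sets) is all of `G`. -/
noncomputable def coverCount {n : ℕ} (L : GSeq) (G : SimpleGraph (Fin n)) : ℕ :=
  Nat.card {C : Fin L.length → G.Subgraph //
    (∀ i, Nonempty ((L.get i).2 ≃g (C i).coe)) ∧ (⨆ i, C i) = ⊤}


variable {V W : Type*}

noncomputable def cnt {k : ℕ} (F : SimpleGraph (Fin k)) {V : Type*} (G : SimpleGraph V) : ℕ :=
  Nat.card {S : G.Subgraph // Nonempty (F ≃g S.coe)}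

instance subgraphFinite [Finite V] (G : SimpleGraph V) : Finite G.Subgraph := by
  have : Finite (Set V × (V → V → Prop)) := by infer_instance
  exact Finite.of_injective (fun S => (S.verts, S.Adj)) (by
    intro S T h
    simp only [Prod.mk.injEq] at h
    exact SimpleGraph.Subgraph.ext h.1 h.2)

/-- coe iso along injective map -/
noncomputable def coeIsoMap {G : SimpleGraph V} {G' : SimpleGraph W} (f : G →g G')
    (hf : Function.Injective f) (S : G.Subgraph) : S.coe ≃g (S.map f).coe where
  toEquiv := Equiv.Set.image f S.verts hf
  map_rel_iff' := by
    rintro ⟨a, ha⟩ ⟨b, hb⟩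
    constructor
    · rintro ⟨u, v, h, hu, hv⟩
      have hu' : u = a := hf hu
      have hv' : v = b := hf hv
      subst hu' hv'
      exact h
    · intro h
      exact ⟨a, b, h, rfl, rfl⟩

def subgraphEquivOfIso {G : SimpleGraph V} {G' : SimpleGraph W} (e : G ≃g G') :
    G.Subgraph ≃ G'.Subgraph where
  toFun := SimpleGraph.Subgraph.map e.toHom
  invFun := SimpleGraph.Subgraph.map e.symm.toHom
  left_inv S := by
    ext x y
    · simp [SimpleGraph.Subgraph.map]
    · simp only [SimpleGraph.Subgraph.map_adj, Relation.Map]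
      constructor
      · rintro ⟨a, b, ⟨u, v, h, rfl, rfl⟩, rfl, rfl⟩
        simpa using h
      · intro h
        exact ⟨e x, e y, ⟨x, y, h, rfl, rfl⟩, by simp, by simp⟩
  right_inv S := by
    ext x y
    · simp [SimpleGraph.Subgraph.map]
    · simp only [SimpleGraph.Subgraph.map_adj, Relation.Map]
      constructor
      · rintro ⟨a, b, ⟨u, v, h, rfl, rfl⟩, rfl, rfl⟩
        simpa using h
      · intro h
        exact ⟨e.symm x, e.symm y, ⟨x, y, h, rfl, rfl⟩, by simp, by simp⟩

lemma cnt_congr {k : ℕ} (F : SimpleGraph (Fin k)) {G : SimpleGraph V} {G' : SimpleGraph W}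
    (e : G ≃g G') : cnt F G = cnt F G' := by
  apply Nat.card_congr
  refine Equiv.subtypeEquiv (subgraphEquivOfIso e) (fun S => ?_)
  constructor
  · rintro ⟨i⟩
    exact ⟨(coeIsoMap e.toHom e.injective S).comp i⟩
  · rintro ⟨i⟩
    refine ⟨((coeIsoMap e.toHom e.injective S).symm.comp i : _)⟩

def inclHom (G : SimpleGraph V) (s : Set V) : G.induce s ↪g G :=
  SimpleGraph.Embedding.comap (Function.Embedding.subtype _) G

def restrictSub {G : SimpleGraph V} {s : Set V} (S : G.Subgraph) : (G.induce s).Subgraph where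
  verts := Subtype.val ⁻¹' S.verts
  Adj a b := S.Adj a b
  adj_sub h := S.adj_sub h
  edge_vert h := S.edge_vert h
  symm := ⟨fun a b h => S.adj_symm h⟩

lemma map_restrict {G : SimpleGraph V} {s : Set V} (S : G.Subgraph) (hS : S.verts ⊆ s) :
    (restrictSub (s := s) S).map (inclHom G s).toHom = S := by
  ext x y
  · constructor
    · rintro ⟨a, ha, rfl⟩; exact ha
    · intro hx; exact ⟨⟨x, hS hx⟩, hx, rfl⟩
  · constructor
    · rintro ⟨a, b, h, rfl, rfl⟩; exact h
    · intro h
      exact ⟨⟨x, hS (S.edge_vert h)⟩, ⟨y, hS (S.edge_vert h.symm)⟩, h, rfl, rfl⟩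

lemma restrict_map {G : SimpleGraph V} {s : Set V} (S' : (G.induce s).Subgraph) :
    restrictSub (s := s) (S'.map (inclHom G s).toHom) = S' := by
  ext x y
  · constructor
    · rintro ⟨a, ha, hax⟩
      rwa [show a = x from Subtype.ext hax] at ha
    · intro hx; exact ⟨x, hx, rfl⟩
  · constructor
    · rintro ⟨a, b, h, ha, hb⟩
      rwa [show a = x from Subtype.ext ha, show b = y from Subtype.ext hb] at h
    · intro h; exact ⟨x, y, h, rfl, rfl⟩

def coe_iso_of_eq {G : SimpleGraph V} {A B : G.Subgraph} (h : A = B) : A.coe ≃g B.coe :=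
  h ▸ (RelIso.refl A.coe.Adj : A.coe ≃g A.coe)

noncomputable def delEquiv {k : ℕ} (F : SimpleGraph (Fin k)) (G : SimpleGraph V) (s : Set V) :
    {S : G.Subgraph // Nonempty (F ≃g S.coe) ∧ S.verts ⊆ s} ≃
    {S' : (G.induce s).Subgraph // Nonempty (F ≃g S'.coe)} where
  toFun := fun ⟨S, h, hs⟩ => ⟨restrictSub S,
    h.elim fun e => ⟨e.trans ((coeIsoMap (inclHom G s).toHom (fun _ _ hh => Subtype.ext hh)
      (restrictSub S)).trans (coe_iso_of_eq (map_restrict S hs))).symm⟩⟩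
  invFun := fun ⟨S', h⟩ => ⟨S'.map (inclHom G s).toHom,
    h.elim fun e => ⟨e.trans (coeIsoMap (inclHom G s).toHom
      (fun _ _ hh => Subtype.ext hh) S')⟩,
    by rintro x ⟨a, _, rfl⟩; exact a.2⟩
  left_inv := fun ⟨S, h, hs⟩ => Subtype.ext (map_restrict S hs)
  right_inv := fun ⟨S', h⟩ => Subtype.ext (restrict_map S')

lemma natCard_sigma {ι : Type*} [Fintype ι] (f : ι → Type*) [∀ i, Finite (f i)] :
    Nat.card (Σ i, f i) = ∑ i, Nat.card (f i) := by
  letI : ∀ i, Fintype (f i) := fun i => Fintype.ofFinite _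
  simp [Nat.card_eq_fintype_card]

lemma key {n k : ℕ} (hk : k < n) (G : SimpleGraph (Fin n)) (F : SimpleGraph (Fin k)) :
    (n - k) * cnt F G = ∑ v : Fin n, cnt F (G.induce {v}ᶜ) := by
  classical
  set X := {S : G.Subgraph // Nonempty (F ≃g S.coe)} with hX
  letI : Fintype X := Fintype.ofFinite _
  have hverts : ∀ S : X, Nat.card {v : Fin n // v ∉ S.1.verts} = n - k := by
    rintro ⟨S, ⟨e⟩⟩
    have h1 : Nat.card S.verts = k := by
      rw [Nat.card_congr e.toEquiv.symm]; simp
    have h2 : {v : Fin n // v ∉ S.verts} ≃ ↥(S.vertsᶜ) :=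
      Equiv.subtypeEquivRight (by simp)
    rw [Nat.card_congr h2]
    letI : Fintype ↥S.verts := Fintype.ofFinite _
    letI : Fintype ↥(S.vertsᶜ) := Fintype.ofFinite _
    rw [Nat.card_eq_fintype_card, Fintype.card_compl_set, ← h1,
      Nat.card_eq_fintype_card, Fintype.card_fin]
  -- the double-counted set
  have eA : {p : X × Fin n // p.2 ∉ p.1.1.verts} ≃ Σ S : X, {v : Fin n // v ∉ S.1.verts} :=
    Equiv.subtypeProdEquivSigmaSubtype (fun (S : X) (v : Fin n) => v ∉ S.1.verts)
  have eB : {p : X × Fin n // p.2 ∉ p.1.1.verts} ≃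
      Σ v : Fin n, {S' : (G.induce {v}ᶜ).Subgraph // Nonempty (F ≃g S'.coe)} := by
    refine Equiv.trans
      (⟨fun p => ⟨(p.1.2, p.1.1), p.2⟩, fun q => ⟨(q.1.2, q.1.1), q.2⟩,
        fun p => rfl, fun q => rfl⟩ :
        {p : X × Fin n // p.2 ∉ p.1.1.verts} ≃ {q : Fin n × X // q.1 ∉ q.2.1.verts}) ?_
    refine (Equiv.subtypeProdEquivSigmaSubtype (fun (v : Fin n) (S : X) => v ∉ S.1.verts)).trans ?_
    refine Equiv.sigmaCongrRight (fun v => ?_)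
    refine Equiv.trans ?_ (delEquiv F G {v}ᶜ)
    refine Equiv.trans (Equiv.subtypeSubtypeEquivSubtypeInter
      (fun S : G.Subgraph => Nonempty (F ≃g S.coe)) (fun S => v ∉ S.verts)) ?_
    exact Equiv.subtypeEquivRight (by
      intro S
      simp only [Set.mem_setOf_eq, and_congr_right_iff]
      intro _
      constructor
      · intro hv x hx hxv
        exact hv (hxv ▸ hx)
      · intro hsub hv
        exact hsub hv rfl)
  have hA : Nat.card {p : X × Fin n // p.2 ∉ p.1.1.verts} = (n - k) * cnt F G := by
    rw [Nat.card_congr eA, natCard_sigma]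
    simp only [hverts]
    rw [Finset.sum_const, Finset.card_univ, smul_eq_mul, mul_comm]
    congr 1
    exact (Nat.card_eq_fintype_card).symm
  have hB : Nat.card {p : X × Fin n // p.2 ∉ p.1.1.verts} =
      ∑ v : Fin n, cnt F (G.induce {v}ᶜ) := by
    rw [Nat.card_congr eB, natCard_sigma]
    rfl
  rw [← hA, hB]

/-- **Kelly's lemma.** If `H` is a reconstruction of an `n`-vertex graph `G`
(`n ≥ 1`), then `s(F,G) = s(F,H)` for every graph `F` with fewer than `n`
vertices. -/
theorem stmt_0 {n : ℕ} (hn : 1 ≤ n) (G H : SimpleGraph (Fin n))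
    (hrec : IsReconstruction G H) {k : ℕ} (hk : k < n) (F : SimpleGraph (Fin k)) :
    subCount F G = subCount F H := by
  obtain ⟨f, hf⟩ := hrec
  have hs : ∑ v : Fin n, cnt F (G.induce {v}ᶜ) = ∑ v : Fin n, cnt F (H.induce {v}ᶜ) := by
    calc ∑ v : Fin n, cnt F (G.induce {v}ᶜ)
        = ∑ v : Fin n, cnt F (H.induce {f v}ᶜ) :=
          Finset.sum_congr rfl (fun v _ => cnt_congr F (hf v).some)
      _ = ∑ v : Fin n, cnt F (H.induce {v}ᶜ) := Equiv.sum_comp f (fun v => cnt F (H.induce {v}ᶜ))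
  have hmul : (n - k) * cnt F G = (n - k) * cnt F H :=
    (key hk G F).trans (hs.trans (key hk H F).symm)
  exact Nat.eq_of_mul_eq_mul_left (Nat.sub_pos_of_lt hk) hmul
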